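/- For the limiting discounted value function V and no-packet states s = (v1, ∞), define the action gap G(v1) = V((v1,∞); 0) − V((v1,∞); 1) = α·V(v1+1, ∞) − (λ + α[(1−q)V(v1+1, 1) + q·V(1, ∞)]). Then G is strictly increasing in v1: G(v1+1) > G(v1) for all v1 ≥ 1. -/

import Mathlib

/-- Value-iteration iterates for the sampling CMDP.  States are `(v1, v2)` with
`v2 : Option ℕ` (`none` meaning the transmitter holds no packet, `v2 = ∞`). -/
noncomputable def V (α q lam : ℝ) : ℕ → ℕ → Option ℕ → ℝ
  | 0, _, _ => 0
  | n + 1, v1, v2 =>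
      (v1 : ℝ) +
        min
          (lam + α * ((1 - q) * V α q lam n (v1 + 1) (some 1) +
            q * V α q lam n 1 none))
          (match v2 with
            | some w => α * ((1 - q) * V α q lam n (v1 + 1) (some (w + 1)) +
                q * V α q lam n (w + 1) none)
            | none => α * V α q lam n (v1 + 1) none)

open Filter

/-- geometric partial sums `d 0 = 0`, `d (n+1) = 1 + r * d n`. -/
noncomputable def dseq (r : ℝ) : ℕ → ℝ
  | 0 => 0
  | n + 1 => 1 + r * dseq r n

lemma dseq_nonneg {r : ℝ} (hr : 0 ≤ r) : ∀ n, 0 ≤ dseq r n := by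
  intro n
  induction n with
  | zero => simp [dseq]
  | succ n ih => simp only [dseq]; nlinarith

lemma dseq_eq {r : ℝ} (hr : r ≠ 1) : ∀ n, dseq r n = (1 - r ^ n) / (1 - r) := by
  have h1 : 1 - r ≠ 0 := by intro h; apply hr; linarith [sub_eq_zero.mp h]
  intro n
  induction n with
  | zero => simp [dseq]
  | succ n ih =>
    simp only [dseq, ih]
    field_simp
    ring

/-- the key exact difference identity for `some` states -/
lemma V_some_diff (α q lam : ℝ) :
    ∀ n v1 w, V α q lam n (v1 + 1) (some w)
      = V α q lam n v1 (some w) + dseq (α * (1 - q)) n := by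
  intro n
  induction n with
  | zero => intro v1 w; simp [V, dseq]
  | succ n ih =>
    intro v1 w
    have h1 := ih (v1 + 1) 1
    have h2 := ih (v1 + 1) (w + 1)
    simp only [V, dseq]
    rw [h1, h2]
    push_cast
    rw [show lam + α * ((1 - q) * (V α q lam n (v1 + 1) (some 1) +
          dseq (α * (1 - q)) n) + q * V α q lam n 1 none)
        = (lam + α * ((1 - q) * V α q lam n (v1 + 1) (some 1) +
          q * V α q lam n 1 none)) + α * (1 - q) * dseq (α * (1 - q)) n by ring,
      show α * ((1 - q) * (V α q lam n (v1 + 1) (some (w + 1)) +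
          dseq (α * (1 - q)) n) + q * V α q lam n (w + 1) none)
        = (α * ((1 - q) * V α q lam n (v1 + 1) (some (w + 1)) +
          q * V α q lam n (w + 1) none)) + α * (1 - q) * dseq (α * (1 - q)) n by ring,
      min_add_add_right]
    ring

/-- the lower bound on differences for `none` states -/
lemma V_none_diff (α q lam : ℝ) (hα0 : 0 < α) (hα1 : α < 1)
    (hq0 : 0 < q) (hq1 : q < 1) :
    ∀ n v1, V α q lam n v1 none + dseq (α * (1 - q)) n
      ≤ V α q lam n (v1 + 1) none := by
  have hr : 0 ≤ α * (1 - q) := by nlinarith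
  intro n
  induction n with
  | zero => intro v1; simp [V, dseq]
  | succ n ih =>
    intro v1
    have h1 := V_some_diff α q lam n (v1 + 1) 1
    have h2 := ih (v1 + 1)
    have hd := dseq_nonneg hr n
    simp only [V, dseq]
    push_cast
    set D := dseq (α * (1 - q)) n with hD
    have hA : lam + α * ((1 - q) * V α q lam n (v1 + 1 + 1) (some 1) +
          q * V α q lam n 1 none)
        = (lam + α * ((1 - q) * V α q lam n (v1 + 1) (some 1) +
          q * V α q lam n 1 none)) + α * (1 - q) * D := by
      rw [h1]; ring
    have hB : α * V α q lam n (v1 + 1) none + α * (1 - q) * D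
        ≤ α * V α q lam n (v1 + 1 + 1) none := by
      have h3 : α * V α q lam n (v1 + 1) none + α * D
          ≤ α * V α q lam n (v1 + 1 + 1) none := by
        have h4 := mul_le_mul_of_nonneg_left h2 (le_of_lt hα0)
        rw [mul_add] at h4
        linarith
      nlinarith [mul_nonneg (mul_nonneg (le_of_lt hα0) (le_of_lt hq0)) hd]
    have hmin : min (lam + α * ((1 - q) * V α q lam n (v1 + 1) (some 1) +
          q * V α q lam n 1 none)) (α * V α q lam n (v1 + 1) none)
          + α * (1 - q) * D
        ≤ min (lam + α * ((1 - q) * V α q lam n (v1 + 1 + 1) (some 1) +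
          q * V α q lam n 1 none)) (α * V α q lam n (v1 + 1 + 1) none) := by
      rw [hA]
      apply le_min
      · exact add_le_add (min_le_left _ _) (le_refl _)
      · exact le_trans (add_le_add (min_le_right _ _) (le_refl _)) hB
    linarith

/-- The action gap `G(v1) = V((v1,∞);0) − V((v1,∞);1)` of the limiting
discounted value function at no-packet states is strictly increasing in the
monitor age. -/
theorem action_gap_strict_mono (α q lam : ℝ) (hα0 : 0 < α) (hα1 : α < 1)
    (hq0 : 0 < q) (hq1 : q < 1) (hlam : 0 ≤ lam)
    (Vlim : ℕ → Option ℕ → ℝ)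
    (hVlim : ∀ v1 v2, Tendsto (fun n => V α q lam n v1 v2) atTop
      (nhds (Vlim v1 v2)))
    (G : ℕ → ℝ)
    (hG : ∀ v1, G v1 = α * Vlim (v1 + 1) none -
      (lam + α * ((1 - q) * Vlim (v1 + 1) (some 1) + q * Vlim 1 none))) :
    ∀ v1 : ℕ, 1 ≤ v1 → G v1 < G (v1 + 1) := by
  set r : ℝ := α * (1 - q) with hrdef
  have hr0 : 0 ≤ r := by nlinarith
  have hr1 : r < 1 := by nlinarith
  have hrne : r ≠ 1 := ne_of_lt hr1
  have hden : 0 < 1 - r := by linarith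
  set c : ℝ := 1 / (1 - r) with hcdef
  have hc0 : 0 < c := by positivity
  have hdlim : Tendsto (fun n => dseq r n) atTop (nhds c) := by
    have hpow : Tendsto (fun n : ℕ => r ^ n) atTop (nhds 0) :=
      tendsto_pow_atTop_nhds_zero_of_lt_one hr0 hr1
    have : Tendsto (fun n : ℕ => (1 - r ^ n) / (1 - r)) atTop
        (nhds ((1 - 0) / (1 - r))) :=
      ((tendsto_const_nhds.sub hpow)).div_const _
    simpa [hcdef, dseq_eq hrne] using this
  intro v1 _
  have hsome : Vlim (v1 + 2) (some 1) = Vlim (v1 + 1) (some 1) + c := by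
    have h1 : Tendsto (fun n => V α q lam n (v1 + 2) (some 1)) atTop
        (nhds (Vlim (v1 + 2) (some 1))) := hVlim _ _
    have h2 : Tendsto (fun n => V α q lam n (v1 + 1) (some 1) + dseq r n) atTop
        (nhds (Vlim (v1 + 1) (some 1) + c)) := (hVlim _ _).add hdlim
    have heq : (fun n => V α q lam n (v1 + 2) (some 1))
        = fun n => V α q lam n (v1 + 1) (some 1) + dseq r n := by
      funext n
      simpa [hrdef] using V_some_diff α q lam n (v1 + 1) 1
    rw [heq] at h1
    exact tendsto_nhds_unique h1 h2
  have hnone : Vlim (v1 + 1) none + c ≤ Vlim (v1 + 2) none := by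
    have h1 : Tendsto (fun n => V α q lam n (v1 + 2) none) atTop
        (nhds (Vlim (v1 + 2) none)) := hVlim _ _
    have h2 : Tendsto (fun n => V α q lam n (v1 + 1) none + dseq r n) atTop
        (nhds (Vlim (v1 + 1) none + c)) := (hVlim _ _).add hdlim
    refine le_of_tendsto_of_tendsto h2 h1 ?_
    filter_upwards with n
    simpa [hrdef] using V_none_diff α q lam hα0 hα1 hq0 hq1 n (v1 + 1)
  rw [hG v1, hG (v1 + 1)]
  have h2eq : (v1 + 1 + 1 : ℕ) = v1 + 2 := by ring
  rw [h2eq, hsome]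
  have hmul : α * Vlim (v1 + 1) none + α * c ≤ α * Vlim (v1 + 2) none := by
    have h5 := mul_le_mul_of_nonneg_left hnone (le_of_lt hα0)
    rw [mul_add] at h5
    exact h5
  nlinarith [hmul, mul_pos (mul_pos hα0 hq0) hc0]
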